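/- Consider the linear program over x ∈ R_{≥0}^{d+1} with the objective Σ_k (1/2) x_k + (η/(d+1)) x_1 − (η/(d+1)) x_{d+1}, constraints Σ_k (1/2) x_k + η(x_i − x_{i+1}) ≤ T/2 for i ∈ [d], Σ_k x_k ≤ T, and the additional constraint x_1 = 0. Then the optimal value is (T/2)·(1 − 2η/(d(d+1))), attained at x_2 = ... = x_{d+1} = T/d. -/

import Mathlib

lemma lp_aux (D T S η : ℝ) (hD : 1 ≤ D) (hS0 : 0 ≤ S) (hST : S ≤ T)
    (hη0 : 0 < η) (hη1 : η ≤ 1 / 2) :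
    S / 2 - η / (D + 1) * (S / D - (T - S) / (2 * η) * ((D - 1) / 2))
      ≤ T / 2 * (1 - 2 * η / (D * (D + 1))) := by
  rw [← sub_nonneg]
  have key : 0 ≤ (T - S) * (D * (D + 3)) - 4 * η * (T - S) := by
    nlinarith [mul_nonneg (sub_nonneg.mpr hST) (by nlinarith : (0:ℝ) ≤ D * (D + 3) - 4 * η)]
  have heq : T / 2 * (1 - 2 * η / (D * (D + 1))) -
      (S / 2 - η / (D + 1) * (S / D - (T - S) / (2 * η) * ((D - 1) / 2)))
      = ((T - S) * (D * (D + 3)) - 4 * η * (T - S)) / (4 * D * (D + 1)) := by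
    have hD0 : D ≠ 0 := by linarith
    have hD1 : D + 1 ≠ 0 := by linarith
    have hη : η ≠ 0 := ne_of_gt hη0
    field_simp
    ring
  rw [heq]
  have : (0:ℝ) < 4 * D * (D + 1) := by nlinarith
  positivity

/-- Objective of the lower-bound DLP. -/
noncomputable def lpObj (d : ℕ) (η : ℝ) (x : Fin (d + 1) → ℝ) : ℝ :=
  (∑ k, (1 / 2 : ℝ) * x k) + (η / ((d : ℝ) + 1)) * x 0 - (η / ((d : ℝ) + 1)) * x (Fin.last d)

/-- Feasible region of the lower-bound DLP. -/
def lpFeas (d : ℕ) (T η : ℝ) (x : Fin (d + 1) → ℝ) : Prop :=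
  (∀ k, 0 ≤ x k) ∧
    (∀ i : Fin d, (∑ k, (1 / 2 : ℝ) * x k) + η * (x i.castSucc - x i.succ) ≤ T / 2) ∧
    (∑ k, x k) ≤ T

/-- With the additional constraint `x_1 = 0`, the optimal value of the lower-bound DLP is
`(T/2)(1 - 2η/(d(d+1)))`, attained at `x_2 = ⋯ = x_{d+1} = T/d`. -/
theorem lp_first_zero_optimal (d : ℕ) (hd : 1 ≤ d) (T η : ℝ) (hT : 0 < T)
    (hη0 : 0 < η) (hη1 : η ≤ 1 / 2) :
    lpFeas d T η (fun k => if k = 0 then 0 else T / (d : ℝ)) ∧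
      (fun k : Fin (d + 1) => if k = 0 then (0 : ℝ) else T / (d : ℝ)) 0 = 0 ∧
      lpObj d η (fun k => if k = 0 then 0 else T / (d : ℝ)) =
        (T / 2) * (1 - 2 * η / ((d : ℝ) * ((d : ℝ) + 1))) ∧
      ∀ x, lpFeas d T η x → x 0 = 0 →
        lpObj d η x ≤ (T / 2) * (1 - 2 * η / ((d : ℝ) * ((d : ℝ) + 1))) := by
  have hD : (1 : ℝ) ≤ (d : ℝ) := by exact_mod_cast hd
  have hD0 : (0 : ℝ) < (d : ℝ) := by linarith
  have hTd : 0 ≤ T / (d : ℝ) := le_of_lt (div_pos hT hD0)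
  -- sums for the candidate point
  have hsum : (∑ k : Fin (d + 1), (fun k => if k = 0 then (0:ℝ) else T / (d : ℝ)) k) = T := by
    rw [Fin.sum_univ_succ]
    simp [Fin.succ_ne_zero, Finset.sum_const, Finset.card_univ]
    field_simp
  have hsum2 : (∑ k : Fin (d + 1), (1/2 : ℝ) *
      (fun k => if k = 0 then (0:ℝ) else T / (d : ℝ)) k) = T / 2 := by
    rw [← Finset.mul_sum, hsum]; ring
  refine ⟨⟨?_, ?_, ?_⟩, ?_, ?_, ?_⟩
  · intro k; by_cases h : k = 0 <;> simp [h, hTd]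
  · intro i
    rw [hsum2]
    have h1 : (fun k : Fin (d+1) => if k = 0 then (0:ℝ) else T / (d : ℝ)) i.succ
        = T / (d : ℝ) := by simp [Fin.succ_ne_zero]
    have h2 : (fun k : Fin (d+1) => if k = 0 then (0:ℝ) else T / (d : ℝ)) i.castSucc
        ≤ T / (d : ℝ) := by by_cases h : i.castSucc = 0 <;> simp [h, hTd]
    nlinarith [h2, h1.ge]
  · rw [hsum]
  · simp
  · have hlast : (Fin.last d : Fin (d+1)) ≠ 0 := by
      intro h
      have := congrArg Fin.val h
      simp at this
      omega
    simp only [lpObj, hsum2]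
    simp [hlast]
    field_simp
  · rintro x ⟨hpos, hcon, hsumT⟩ hx0
    set S := ∑ k : Fin (d+1), x k with hS
    have hhalf : (∑ k : Fin (d+1), (1/2 : ℝ) * x k) = S / 2 := by
      rw [← Finset.mul_sum]; ring
    set ε := (T - S) / (2 * η) with hε
    have hε0 : 0 ≤ ε := div_nonneg (by linarith) (by linarith)
    -- monotone shifted function
    have hmono : Monotone (fun k : Fin (d+1) => x k + (k : ℕ) * ε) := by
      rw [Fin.monotone_iff_le_succ]
      intro i
      have h := hcon i
      rw [hhalf] at h
      have hdiff : x i.castSucc - x i.succ ≤ ε := by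
        rw [hε, le_div_iff₀ (by linarith)]
        nlinarith
      have hc : ((i.castSucc : ℕ) : ℝ) = (i : ℕ) := by simp
      have hs : ((i.succ : ℕ) : ℝ) = (i : ℕ) + 1 := by simp
      simp only [hc, hs]
      nlinarith
    have hkey : ∀ k : Fin (d+1), x k + (k : ℕ) * ε ≤ x (Fin.last d) + (d : ℝ) * ε := by
      intro k
      have := hmono (Fin.le_last k)
      simpa using this
    -- lower bound on x last
    have hSsum : S = ∑ i : Fin d, x i.succ := by
      rw [hS, Fin.sum_univ_succ, hx0, zero_add]
    have hSle : S ≤ (d : ℝ) * x (Fin.last d) + ε * ((d:ℝ) * ((d:ℝ) - 1) / 2) := by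
      rw [hSsum]
      have hterm : ∀ i : Fin d, x i.succ ≤ x (Fin.last d) + ((d:ℝ) - ((i:ℕ) + 1)) * ε := by
        intro i
        have := hkey i.succ
        have hs : ((i.succ : ℕ) : ℝ) = (i : ℕ) + 1 := by simp
        rw [hs] at this
        linarith
      calc ∑ i : Fin d, x i.succ ≤ ∑ i : Fin d, (x (Fin.last d) + ((d:ℝ) - ((i:ℕ) + 1)) * ε) :=
            Finset.sum_le_sum fun i _ => hterm i
        _ = (d : ℝ) * x (Fin.last d) + ε * ((d:ℝ) * ((d:ℝ) - 1) / 2) := by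
            rw [Finset.sum_add_distrib, Finset.sum_const, Finset.card_univ, Fintype.card_fin]
            have hexp : ∑ i : Fin d, ((d:ℝ) - ((i:ℕ) + 1)) * ε
                = ((d:ℝ) * (d:ℝ) - (∑ i : Fin d, ((i:ℕ):ℝ)) - (d:ℝ)) * ε := by
              rw [← Finset.sum_mul]
              congr 1
              rw [show ∑ i : Fin d, ((d:ℝ) - ((i:ℕ) + 1)) =
                  ∑ i : Fin d, ((d:ℝ) - ((i:ℕ):ℝ) - 1) from by congr 1; ext i; ring]
              rw [Finset.sum_sub_distrib, Finset.sum_sub_distrib, Finset.sum_const,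
                Finset.sum_const, Finset.card_univ, Fintype.card_fin]
              push_cast
              ring
            rw [hexp]
            have hsumi : (∑ i : Fin d, ((i:ℕ):ℝ)) = (d:ℝ) * ((d:ℝ) - 1) / 2 := by
              rw [Fin.sum_univ_eq_sum_range]
              have h3 : ((∑ i ∈ Finset.range d, i) * 2 : ℕ) = d * (d-1) :=
                Finset.sum_range_id_mul_two d
              have h4 := congrArg (Nat.cast : ℕ → ℝ) h3
              push_cast [Nat.cast_sub hd] at h4
              linarith
            rw [hsumi]
            ring
    have hS0 : 0 ≤ S := Finset.sum_nonneg fun k _ => hpos k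
    have hxl : S / (d:ℝ) - ε * (((d:ℝ) - 1) / 2) ≤ x (Fin.last d) := by
      rw [div_sub' (ne_of_gt hD0), div_le_iff₀ hD0]
      nlinarith
    -- conclude
    clear_value S ε
    rw [lpObj, hhalf, hx0, mul_zero, add_zero]
    have hc0 : 0 < (d:ℝ) + 1 := by linarith
    have hcpos : 0 < η / ((d:ℝ) + 1) := div_pos hη0 hc0
    have hb : η / ((d:ℝ) + 1) * (S / (d:ℝ) - ε * (((d:ℝ) - 1) / 2))
        ≤ η / ((d:ℝ) + 1) * x (Fin.last d) :=
      mul_le_mul_of_nonneg_left hxl (le_of_lt hcpos)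
    have hgoal : S / 2 - η / ((d:ℝ) + 1) * (S / (d:ℝ) - ε * (((d:ℝ) - 1) / 2))
        ≤ T / 2 * (1 - 2 * η / ((d:ℝ) * ((d:ℝ) + 1))) := by
      rw [hε]
      exact lp_aux (d:ℝ) T S η hD hS0 hsumT hη0 hη1
    linarith
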